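/- Let Q ⊂ ℤ^d be finite with |Q| = N and let 𝒯(Q) be the span of the exponentials e^{i⟨k,x⟩}, k ∈ Q, on 𝕋^d. Suppose there exist m points x¹,…,x^m ∈ 𝕋^d such that ‖f‖_∞ ≤ D·max_j|f(x^j)| for all f ∈ 𝒯(Q). Then for any measurable B ⊂ 𝕋^d with |B| < 1/m, every f ∈ 𝒯(Q) satisfies ‖f‖_{L_∞(𝕋^d)} ≤ D·‖f‖_{L_∞(𝕋^d \ B)}. -/

import Mathlib

open MeasureTheory Set

private lemma trig_periodic (d : ℕ) (Q : Finset (Fin d → ℤ)) {f : (Fin d → ℝ) → ℂ}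
    (hf : f ∈ Submodule.span ℂ ((fun k : Fin d → ℤ => fun y : Fin d → ℝ =>
      Complex.exp (Complex.I * ∑ i, (k i : ℂ) * (y i : ℂ))) '' (Q : Set (Fin d → ℤ))))
    (z : Fin d → ℝ) (n : Fin d → ℤ) :
    f (fun i => z i + (n i : ℝ) * (2 * Real.pi)) = f z := by
  induction hf using Submodule.span_induction with
  | mem g hg =>
    obtain ⟨k, -, rfl⟩ := hg
    have key : ∑ i, (k i : ℂ) * ((z i : ℝ) + (n i : ℝ) * (2 * Real.pi) : ℝ)
        = (∑ i, (k i : ℂ) * (z i : ℝ)) + (∑ i, (k i * n i : ℤ)) * ((2 * Real.pi : ℝ) : ℂ) := by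
      push_cast
      rw [Finset.sum_mul, ← Finset.sum_add_distrib]
      exact Finset.sum_congr rfl fun i _ => by ring
    simp only [key]
    rw [mul_add, Complex.exp_add]
    have : Complex.I * ((∑ i, (k i * n i : ℤ) : ℤ) * ((2 * Real.pi : ℝ) : ℂ))
        = ((∑ i, (k i * n i : ℤ) : ℤ) : ℂ) * (2 * Real.pi * Complex.I) := by
      push_cast; ring
    rw [this, Complex.exp_int_mul_two_pi_mul_I, mul_one]
  | zero => rfl
  | add g h _ _ ihg ihh => simp only [Pi.add_apply, ihg, ihh]
  | smul c g _ ihg => simp only [Pi.smul_apply, ihg]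

private lemma trig_translate (d : ℕ) (Q : Finset (Fin d → ℤ)) {f : (Fin d → ℝ) → ℂ}
    (hf : f ∈ Submodule.span ℂ ((fun k : Fin d → ℤ => fun y : Fin d → ℝ =>
      Complex.exp (Complex.I * ∑ i, (k i : ℂ) * (y i : ℂ))) '' (Q : Set (Fin d → ℤ))))
    (y : Fin d → ℝ) :
    (fun w => f (fun i => w i + y i)) ∈ Submodule.span ℂ ((fun k : Fin d → ℤ => fun y : Fin d → ℝ =>
      Complex.exp (Complex.I * ∑ i, (k i : ℂ) * (y i : ℂ))) '' (Q : Set (Fin d → ℤ))) := by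
  induction hf using Submodule.span_induction with
  | mem g hg =>
    obtain ⟨k, hk, rfl⟩ := hg
    have : (fun w : Fin d → ℝ => Complex.exp (Complex.I * ∑ i, (k i : ℂ) * ((w i + y i : ℝ) : ℂ)))
        = Complex.exp (Complex.I * ∑ i, (k i : ℂ) * (y i : ℝ)) •
          (fun w : Fin d → ℝ => Complex.exp (Complex.I * ∑ i, (k i : ℂ) * (w i : ℂ))) := by
      funext w
      simp only [Pi.smul_apply, smul_eq_mul, ← Complex.exp_add]
      congr 1
      push_cast
      rw [← mul_add, ← Finset.sum_add_distrib]
      congr 1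
      exact Finset.sum_congr rfl fun i _ => by ring
    exact this ▸ Submodule.smul_mem _ _ (Submodule.subset_span ⟨k, hk, rfl⟩)
  | zero => exact Submodule.zero_mem _
  | add g h hg hh ihg ihh => exact Submodule.add_mem _ ihg ihh
  | smul c g hg ihg => exact Submodule.smul_mem _ _ ihg

theorem remez_for_trig_polynomials
    (d : ℕ) (Q : Finset (Fin d → ℤ))
    (D : ℝ) (hD : 1 ≤ D) (m : ℕ) (hm : 0 < m) (x : Fin m → (Fin d → ℝ))
    (T : Submodule ℂ ((Fin d → ℝ) → ℂ))
    (hT : T = Submodule.span ℂ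
      ((fun k : Fin d → ℤ => fun y : Fin d → ℝ =>
        Complex.exp (Complex.I * ∑ i, (k i : ℂ) * (y i : ℂ))) '' (Q : Set (Fin d → ℤ))))
    (hdisc : ∀ f ∈ T, ∀ z : Fin d → ℝ,
      ‖f z‖ ≤ D * Finset.univ.sup' (Finset.univ_nonempty_iff.mpr ⟨⟨0, hm⟩⟩)
        (fun j => ‖f (x j)‖))
    (box : Set (Fin d → ℝ))
    (hbox : box = Set.univ.pi fun _ : Fin d => Set.Ico (0 : ℝ) (2 * Real.pi))
    (B : Set (Fin d → ℝ)) (hBbox : B ⊆ box) (hB : MeasurableSet B)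
    (hBsmall : ((ENNReal.ofReal ((2 * Real.pi) ^ d))⁻¹ • volume.restrict box) B
      < 1 / m) :
    ∀ f ∈ T, ∀ z : Fin d → ℝ,
      ‖f z‖ ≤ D * sSup ((fun w => ‖f w‖) '' (box \ B)) := by
  intro f hf z
  set p : ℝ := 2 * Real.pi with hpdef
  have hp0 : 0 < p := by positivity
  haveI : Fact (0 < p) := ⟨hp0⟩
  have hbox' : box = Set.univ.pi fun _ : Fin d => Set.Ico (0 : ℝ) (0 + p) := by
    rw [zero_add]; exact hbox
  have hboxMeas : MeasurableSet box := by
    rw [hbox]; exact MeasurableSet.univ_pi fun _ => measurableSet_Ico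
  set ψ : (Fin d → ℝ) → (Fin d → AddCircle p) := fun y i => (y i : AddCircle p) with hψdef
  -- the restricted volume on the box is a product measure
  have hres : volume.restrict box
      = Measure.pi (fun _ : Fin d => volume.restrict (Ico (0:ℝ) (0+p))) := by
    refine (Measure.pi_eq fun s hs => ?_).symm
    rw [Measure.restrict_apply (MeasurableSet.univ_pi hs), hbox', ← Set.pi_inter_distrib,
      volume_pi, Measure.pi_pi]
    exact Finset.prod_congr rfl fun i _ => (Measure.restrict_apply (hs i)).symm
  -- ψ is measure preserving
  have hψmp : MeasurePreserving ψ (volume.restrict box) volume := by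
    rw [hres]
    have h1 : ∀ _i : Fin d, MeasurePreserving ((↑) : ℝ → AddCircle p)
        (volume.restrict (Ico (0:ℝ) (0+p))) volume := fun _ => by
      rw [restrict_Ico_eq_restrict_Ioc]
      exact AddCircle.measurePreserving_mk p 0
    have h2 := measurePreserving_pi (fun _ : Fin d => volume.restrict (Ico (0:ℝ) (0+p)))
      (fun _ => (volume : Measure (AddCircle p))) h1
    rwa [← volume_pi] at h2
  -- the "representative" map back from the torus
  set r : (Fin d → AddCircle p) → (Fin d → ℝ) :=
    fun v i => ((AddCircle.equivIco p 0 (v i) : Ico (0:ℝ) (0+p)) : ℝ) with hrdef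
  have hrmeas : Measurable r := by
    refine measurable_pi_iff.mpr fun i => ?_
    exact measurable_subtype_coe.comp
      ((AddCircle.measurableEquivIco p 0).measurable.comp (measurable_pi_apply i))
  set Bhat : Set (Fin d → AddCircle p) := r ⁻¹' B with hBhatdef
  have hBhatMeas : MeasurableSet Bhat := hrmeas hB
  have hfix : ∀ t : ℝ, t ∈ Ico (0:ℝ) (0+p) →
      ((AddCircle.equivIco p 0 ((t : ℝ) : AddCircle p) : Ico (0:ℝ) (0+p)) : ℝ) = t := by
    intro t ht
    have : AddCircle.equivIco p 0 (t : AddCircle p) = ⟨t, ht⟩ := by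
      rw [Equiv.apply_eq_iff_eq_symm_apply]; rfl
    rw [this]
  have hrψ : ∀ w ∈ box, r (ψ w) = w := by
    intro w hw
    funext i
    exact hfix (w i) (by rw [hbox'] at hw; exact hw i (mem_univ i))
  -- the measure of Bhat
  have hνBhat : volume Bhat = volume.restrict box B := by
    rw [← hψmp.measure_preimage hBhatMeas.nullMeasurableSet,
      Measure.restrict_apply (hψmp.measurable hBhatMeas),
      Measure.restrict_apply' hboxMeas]
    congr 1
    ext w
    constructor
    · rintro ⟨hw1, hw2⟩
      refine ⟨?_, hw2⟩
      have : r (ψ w) ∈ B := hw1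
      rwa [hrψ w hw2] at this
    · rintro ⟨hw1, hw2⟩
      refine ⟨?_, hw2⟩
      show r (ψ w) ∈ B
      rwa [hrψ w hw2]
  -- bad sets
  set A : Fin m → Set (Fin d → ℝ) :=
    fun j => box ∩ (fun y => ψ (fun i => x j i + y i)) ⁻¹' Bhat with hAdef
  have hAle : ∀ j, volume.restrict box (A j) ≤ volume.restrict box B := by
    intro j
    have hcomp : (fun y => ψ (fun i => x j i + y i)) = (fun v => ψ (x j) + v) ∘ ψ := by
      funext y
      funext i
      rfl
    have hmp2 : MeasurePreserving (fun y => ψ (fun i => x j i + y i))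
        (volume.restrict box) volume := by
      rw [hcomp]
      exact (measurePreserving_add_left volume (ψ (x j))).comp hψmp
    calc volume.restrict box (A j)
        ≤ volume.restrict box ((fun y => ψ (fun i => x j i + y i)) ⁻¹' Bhat) :=
          measure_mono inter_subset_right
      _ = volume Bhat := hmp2.measure_preimage hBhatMeas.nullMeasurableSet
      _ = volume.restrict box B := hνBhat
  -- measure arithmetic
  have hc0 : (ENNReal.ofReal (p ^ d)) ≠ 0 := by
    simp [ENNReal.ofReal_eq_zero, not_le, pow_pos hp0]
  have hct : (ENNReal.ofReal (p ^ d)) ≠ ⊤ := ENNReal.ofReal_ne_top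
  have hm0 : (m : ENNReal) ≠ 0 := Nat.cast_ne_zero.mpr hm.ne'
  have hmt : (m : ENNReal) ≠ ⊤ := ENNReal.natCast_ne_top m
  have hmulB : (m : ENNReal) * volume.restrict box B < ENNReal.ofReal (p ^ d) := by
    have h1 : (ENNReal.ofReal (p ^ d))⁻¹ * volume.restrict box B < 1 / m := by
      simpa [Measure.smul_apply, smul_eq_mul] using hBsmall
    have h2 : volume.restrict box B
        = ENNReal.ofReal (p ^ d) * ((ENNReal.ofReal (p ^ d))⁻¹ * volume.restrict box B) := by
      rw [← mul_assoc, ENNReal.mul_inv_cancel hc0 hct, one_mul]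
    calc (m : ENNReal) * volume.restrict box B
        = (m : ENNReal) * (ENNReal.ofReal (p ^ d)
            * ((ENNReal.ofReal (p ^ d))⁻¹ * volume.restrict box B)) := by rw [← h2]
      _ < (m : ENNReal) * (ENNReal.ofReal (p ^ d) * (1 / m)) := by
          rw [ENNReal.mul_lt_mul_iff_right hm0 hmt, ENNReal.mul_lt_mul_iff_right hc0 hct]
          exact h1
      _ = ENNReal.ofReal (p ^ d) := by
          rw [one_div, mul_comm (ENNReal.ofReal (p ^ d)), ← mul_assoc,
            ENNReal.mul_inv_cancel hm0 hmt, one_mul]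
  have hboxVol : volume box = ENNReal.ofReal (p ^ d) := by
    rw [hbox', volume_pi, Measure.pi_pi]
    simp [Real.volume_Ico, ENNReal.ofReal_pow hp0.le]
  have hUnion : volume.restrict box (⋃ j, A j) < volume.restrict box box := by
    calc volume.restrict box (⋃ j, A j)
        ≤ ∑ j : Fin m, volume.restrict box (A j) := measure_iUnion_fintype_le _ _
      _ ≤ ∑ _j : Fin m, volume.restrict box B := Finset.sum_le_sum fun j _ => hAle j
      _ = (m : ENNReal) * volume.restrict box B := by
          simp [Finset.sum_const, nsmul_eq_mul]
      _ < ENNReal.ofReal (p ^ d) := hmulB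
      _ = volume.restrict box box := by rw [Measure.restrict_apply_self, hboxVol]
  -- pick a good translation
  have hne : (box \ ⋃ j, A j).Nonempty := by
    rw [nonempty_iff_ne_empty]
    intro hcon
    exact absurd (measure_mono (diff_eq_empty.mp hcon)) (not_le.mpr hUnion)
  obtain ⟨y, hybox, hyA⟩ := hne
  -- good representatives
  have hw : ∀ j : Fin m, ∃ wj : Fin d → ℝ, wj ∈ box \ B
      ∧ f (fun i => x j i + y i) = f wj := by
    intro j
    have hyAj : y ∉ A j := fun h => hyA (mem_iUnion.mpr ⟨j, h⟩)
    have hψy : ψ (fun i => x j i + y i) ∉ Bhat := fun h => hyAj ⟨hybox, h⟩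
    set v : Fin d → ℝ := fun i => x j i + y i with hvdef
    refine ⟨r (ψ v), ⟨?_, hψy⟩, ?_⟩
    · rw [hbox']
      intro i _
      exact (AddCircle.equivIco p 0 (ψ v i)).2
    · have hcoord : ∀ i, ∃ nn : ℤ, r (ψ v) i = v i + (nn : ℝ) * p := by
        intro i
        have h1 : ((r (ψ v) i : ℝ) : AddCircle p) = ((v i : ℝ) : AddCircle p) :=
          (AddCircle.equivIco p 0).symm_apply_apply ((v i : ℝ) : AddCircle p)
        rw [QuotientAddGroup.eq] at h1
        obtain ⟨nn, hnn⟩ := AddSubgroup.mem_zmultiples_iff.mp h1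
        refine ⟨-nn, ?_⟩
        have : (nn : ℝ) * p = -(r (ψ v) i) + v i := by rw [← hnn]; simp [zsmul_eq_mul]
        push_cast
        linarith [this]
      choose nn hnn using hcoord
      have : r (ψ v) = fun i => v i + (nn i : ℝ) * p := funext hnn
      rw [this, hpdef]
      exact (trig_periodic d Q (hT ▸ hf) v nn).symm
  -- conclusion
  set g : (Fin d → ℝ) → ℂ := fun w => f (fun i => w i + y i) with hgdef
  have hgT : g ∈ T := hT ▸ trig_translate d Q (hT ▸ hf) y
  have hS : BddAbove ((fun w => ‖f w‖) '' (box \ B)) := by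
    refine ⟨D * Finset.univ.sup' (Finset.univ_nonempty_iff.mpr ⟨⟨0, hm⟩⟩)
      (fun j => ‖f (x j)‖), ?_⟩
    rintro t ⟨w, -, rfl⟩
    exact hdisc f hf w
  have hkey : ∀ j : Fin m, ‖g (x j)‖ ≤ sSup ((fun w => ‖f w‖) '' (box \ B)) := by
    intro j
    obtain ⟨wj, hwj, heq⟩ := hw j
    have hgx : g (x j) = f wj := heq
    rw [hgx]
    exact le_csSup hS ⟨wj, hwj, rfl⟩
  have hfz : f z = g (fun i => z i - y i) := by
    simp only [hgdef, sub_add_cancel]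
  calc ‖f z‖ = ‖g (fun i => z i - y i)‖ := by rw [hfz]
    _ ≤ D * Finset.univ.sup' (Finset.univ_nonempty_iff.mpr ⟨⟨0, hm⟩⟩)
        (fun j => ‖g (x j)‖) := hdisc g hgT _
    _ ≤ D * sSup ((fun w => ‖f w‖) '' (box \ B)) := by
        refine mul_le_mul_of_nonneg_left ?_ (le_trans zero_le_one hD)
        exact Finset.sup'_le _ _ fun j _ => hkey j
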